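/- ∫₀¹ log⁺|1 + e^{2πiθ}| dθ = (3√3/(4π)) · ∑_{n=1}^{∞} χ(n)/n², where χ is the nontrivial quadratic Dirichlet character modulo 3, i.e. χ(n) = 1, −1, 0 according to whether n ≡ 1, 2, 0 (mod 3). In particular this integral equals (3√3/(4π)) · L(2, χ). -/

import Mathlib

open MeasureTheory Real intervalIntegral

/-- `log⁺ r = log (max 1 r)`. -/
noncomputable def logPlus (r : ℝ) : ℝ := Real.log (max 1 r)

/-- The nontrivial quadratic Dirichlet character modulo 3, as a function on `ℕ`:
`χ(n) = 1, −1, 0` according to whether `n ≡ 1, 2, 0 (mod 3)`. -/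
def chi3 (n : ℕ) : ℝ := if n % 3 = 1 then 1 else if n % 3 = 2 then -1 else 0

lemma chi3_abs_le (n : ℕ) : |chi3 n| ≤ 1 := by
  unfold chi3; split_ifs <;> norm_num

lemma chi3_two_mul (m : ℕ) : chi3 (2 * m) = - chi3 m := by
  rcases (show m % 3 = 0 ∨ m % 3 = 1 ∨ m % 3 = 2 by omega) with h | h | h
  · have h2 : (2 * m) % 3 = 0 := by omega
    simp [chi3, h, h2]
  · have h2 : (2 * m) % 3 = 2 := by omega
    simp [chi3, h, h2]
  · have h2 : (2 * m) % 3 = 1 := by omega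
    simp [chi3, h, h2]

lemma sin_two_pi_nat_div_three (n : ℕ) :
    Real.sin (2 * π * n / 3) = (Real.sqrt 3 / 2) * chi3 n := by
  obtain ⟨q, r, hr3, rfl⟩ : ∃ q r, r < 3 ∧ n = 3 * q + r :=
    ⟨n / 3, n % 3, Nat.mod_lt _ (by norm_num), by omega⟩
  have hs : Real.sin (2 * π * (3 * q + r : ℕ) / 3) = Real.sin (2 * π * r / 3) := by
    have h : 2 * π * (3 * q + r : ℕ) / 3 = 2 * π * r / 3 + (q : ℤ) * (2 * π) := by
      push_cast; ring
    rw [h, Real.sin_add_int_mul_two_pi]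
  rw [hs]
  have hmod : (3 * q + r) % 3 = r := by omega
  interval_cases r
  · simp [chi3, hmod]
  · rw [show 2 * π * (1:ℕ) / 3 = π - π / 3 by push_cast; ring, Real.sin_pi_sub,
      Real.sin_pi_div_three]
    simp [chi3, hmod]
  · rw [show 2 * π * (2:ℕ) / 3 = π + π / 3 by push_cast; ring, Real.sin_add]
    simp [chi3, hmod, Real.sin_pi_div_three]

lemma summable_inv_sq : Summable (fun n : ℕ => 1 / (n : ℝ) ^ 2) :=
  summable_one_div_nat_pow.mpr one_lt_two

lemma summable_chi3 : Summable (fun n : ℕ => chi3 n / (n : ℝ) ^ 2) := by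
  refine Summable.of_norm_bounded summable_inv_sq fun n => ?_
  rcases eq_or_ne n 0 with rfl | hn
  · simp [chi3]
  · rw [Real.norm_eq_abs, abs_div, abs_pow, Nat.abs_cast]
    apply div_le_div_of_nonneg_right (chi3_abs_le n)
    positivity

lemma summable_alt_chi3 : Summable (fun n : ℕ => (-1 : ℝ) ^ (n + 1) * chi3 n / (n : ℝ) ^ 2) := by
  refine Summable.of_norm_bounded summable_inv_sq fun n => ?_
  rcases eq_or_ne n 0 with rfl | hn
  · simp [chi3]
  · rw [Real.norm_eq_abs, abs_div, abs_pow, Nat.abs_cast, abs_mul, abs_pow, abs_neg, abs_one,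
      one_pow, one_mul]
    apply div_le_div_of_nonneg_right (chi3_abs_le n)
    positivity

lemma tsum_alt_chi3 :
    ∑' n : ℕ, (-1 : ℝ) ^ (n + 1) * chi3 n / (n : ℝ) ^ 2
      = (3 / 2) * ∑' n : ℕ, chi3 n / (n : ℝ) ^ 2 := by
  set f : ℕ → ℝ := fun n => chi3 n / (n : ℝ) ^ 2 with hf
  set d : ℕ → ℝ := fun n => (-1 : ℝ) ^ (n + 1) * chi3 n / (n : ℝ) ^ 2 with hd
  set e : ℕ → ℝ := fun n => if Even n then f n else 0 with he
  have hse : Summable e := by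
    refine Summable.of_norm_bounded summable_inv_sq fun n => ?_
    simp only [he]
    split_ifs with h
    · rcases eq_or_ne n 0 with rfl | hn
      · simp [hf, chi3]
      · rw [Real.norm_eq_abs, hf, abs_div, abs_pow, Nat.abs_cast]
        apply div_le_div_of_nonneg_right (chi3_abs_le n)
        positivity
    · simp only [norm_zero]
      positivity
  have h2 : ∑' m : ℕ, e (2 * m) = ∑' n, e n := by
    apply Function.Injective.tsum_eq (g := fun m : ℕ => 2 * m)
    · intro a b hab
      dsimp only at hab
      omega
    · intro x hx
      rw [Function.mem_support] at hx
      rcases Nat.even_or_odd x with hev | hodd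
      · obtain ⟨k, hk⟩ := hev
        exact ⟨k, by dsimp only; omega⟩
      · exact absurd (by simp [he, Nat.not_even_iff_odd.mpr hodd]) hx
  have h3 : ∀ m : ℕ, e (2 * m) = -(1 / 4) * f m := by
    intro m
    simp only [he]
    rw [if_pos (even_two_mul m)]
    simp only [hf, chi3_two_mul]
    push_cast
    ring
  have h4 : ∀ n : ℕ, f n - d n = 2 * e n := by
    intro n
    rcases Nat.even_or_odd n with h | h
    · have hp : (-1 : ℝ) ^ (n + 1) = -1 := (h.add_one).neg_one_pow
      simp only [he, if_pos h, hd, hf, hp]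
      ring
    · have hp : (-1 : ℝ) ^ (n + 1) = 1 := (h.add_one).neg_one_pow
      simp only [he, if_neg (Nat.not_even_iff_odd.mpr h), hd, hf, hp]
      ring
  have h5 : ∑' n, (f n - d n) = (∑' n, f n) - ∑' n, d n := Summable.tsum_sub summable_chi3 summable_alt_chi3
  have h6 : ∑' n, (f n - d n) = -(1 / 2) * ∑' n, f n := by
    calc ∑' n, (f n - d n) = ∑' n, 2 * e n := by exact tsum_congr h4
    _ = 2 * ∑' n, e n := tsum_mul_left
    _ = 2 * ∑' m : ℕ, e (2 * m) := by rw [h2]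
    _ = 2 * ∑' m : ℕ, -(1 / 4) * f m := by rw [tsum_congr h3]
    _ = -(1 / 2) * ∑' n, f n := by rw [tsum_mul_left]; ring
  have := h5.symm.trans h6
  linarith


lemma exp_two_pi_I_eq (θ : ℝ) :
    Complex.exp (2 * (π : ℝ) * Complex.I * θ)
      = Complex.exp (((2 * π * θ : ℝ) : ℂ) * Complex.I) := by
  congr 1
  push_cast
  ring

lemma one_add_exp (θ : ℝ) :
    1 + Complex.exp (2 * (π : ℝ) * Complex.I * θ)
      = 2 * Real.cos (π * θ) * Complex.exp (((π * θ : ℝ) : ℂ) * Complex.I) := by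
  rw [exp_two_pi_I_eq]
  have h : ((2 * π * θ : ℝ) : ℂ) = 2 * ((π * θ : ℝ) : ℂ) := by push_cast; ring
  rw [h, Complex.exp_mul_I, Complex.exp_mul_I, Complex.cos_two_mul, Complex.sin_two_mul,
    Complex.ofReal_cos]
  ring

lemma abs_one_add_exp (θ : ℝ) :
    ‖1 + Complex.exp (2 * (π : ℝ) * Complex.I * θ)‖ = 2 * |Real.cos (π * θ)| := by
  rw [one_add_exp, norm_mul, norm_mul, Complex.norm_exp_ofReal_mul_I, Complex.norm_two,
    Complex.norm_real, Real.norm_eq_abs, mul_one]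

/-- Coefficients of the series. -/
noncomputable def coefC (n : ℕ) : ℝ :=
  (-1) ^ (n + 1) * Real.sin (2 * π * n / 3) / (2 * π * (n : ℝ) ^ 2)

lemma abs_coefC_le (n : ℕ) : |coefC n| ≤ 1 / (n : ℝ) ^ 2 := by
  rcases eq_or_ne n 0 with rfl | hn
  · simp [coefC]
  · unfold coefC
    rw [abs_div, abs_mul, abs_pow, abs_neg, abs_one, one_pow, one_mul]
    have hn2 : (0 : ℝ) < (n : ℝ) ^ 2 := by positivity
    have hd : |2 * π * (n : ℝ) ^ 2| = 2 * π * (n : ℝ) ^ 2 := by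
      rw [abs_of_pos]; positivity
    rw [hd]
    apply div_le_div₀ (by positivity) (Real.abs_sin_le_one _) hn2
    nlinarith [Real.pi_gt_three]

lemma summable_abs_coefC : Summable (fun n : ℕ => |coefC n|) :=
  Summable.of_nonneg_of_le (fun _ => abs_nonneg _) abs_coefC_le
    (summable_one_div_nat_pow.mpr one_lt_two)

lemma pointwise_hasSum (r : ℝ) (h1 : |r| < 1) (θ : ℝ) :
    HasSum (fun n : ℕ => (-1 : ℝ) ^ (n + 1) * r ^ n / n * Real.cos (2 * π * n * θ))
      ((Complex.log (1 + r * Complex.exp (2 * (π : ℝ) * Complex.I * θ))).re) := by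
  have hz : ‖(r : ℂ) * Complex.exp (2 * (π : ℝ) * Complex.I * θ)‖ < 1 := by
    rw [norm_mul, exp_two_pi_I_eq]
    rw [Complex.norm_exp_ofReal_mul_I,
      Complex.norm_real, Real.norm_eq_abs, mul_one]
    exact h1
  have h := (Complex.hasSum_taylorSeries_log hz).mapL Complex.reCLM
  convert h using 2 with n
  rw [exp_two_pi_I_eq]
  have key : (-1 : ℂ) ^ (n + 1) * ((r : ℂ) * Complex.exp (((2 * π * θ : ℝ) : ℂ) * Complex.I)) ^ n
        / (n : ℂ)
      = (((-1 : ℝ) ^ (n + 1) * r ^ n / n : ℝ) : ℂ)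
          * Complex.exp (((2 * π * n * θ : ℝ) : ℂ) * Complex.I) := by
    rw [mul_pow, ← Complex.exp_nat_mul]
    push_cast
    ring
  rw [Complex.reCLM_apply, key, Complex.re_ofReal_mul, Complex.exp_ofReal_mul_I_re]
  rfl

lemma integral_cos_nat (n : ℕ) (hn : n ≠ 0) :
    (∫ θ in (0:ℝ)..(1/3 : ℝ), Real.cos (2 * π * n * θ)) = Real.sin (2 * π * n / 3) / (2 * π * n) := by
  have hc : (2 * π * (n : ℝ)) ≠ 0 := by
    have := Real.pi_pos
    have : (0:ℝ) < (n:ℝ) := by exact_mod_cast Nat.pos_of_ne_zero hn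
    positivity
  rw [intervalIntegral.integral_comp_mul_left Real.cos hc]
  rw [integral_cos]
  rw [mul_zero, Real.sin_zero, sub_zero, smul_eq_mul]
  rw [show 2 * π * (n:ℝ) * (1/3) = 2 * π * n / 3 by ring]
  rw [inv_mul_eq_div]

lemma integral_term (r : ℝ) (n : ℕ) :
    (∫ θ in (0:ℝ)..(1/3 : ℝ), (-1 : ℝ) ^ (n + 1) * r ^ n / n * Real.cos (2 * π * n * θ))
      = coefC n * r ^ n := by
  rcases eq_or_ne n 0 with rfl | hn
  · simp [coefC]
  · rw [intervalIntegral.integral_const_mul, integral_cos_nat n hn]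
    have hn' : (n : ℝ) ≠ 0 := Nat.cast_ne_zero.mpr hn
    have hπ : (π : ℝ) ≠ 0 := Real.pi_ne_zero
    unfold coefC
    field_simp

lemma hasSum_J (r : ℝ) (h0 : 0 ≤ r) (h1 : r < 1) :
    HasSum (fun n : ℕ => coefC n * r ^ n)
      (∫ θ in (0:ℝ)..(1/3 : ℝ),
        (Complex.log (1 + r * Complex.exp (2 * (π : ℝ) * Complex.I * θ))).re) := by
  have habs : |r| < 1 := by rwa [abs_of_nonneg h0]
  have H := intervalIntegral.hasSum_integral_of_dominated_convergence
    (μ := volume) (a := (0:ℝ)) (b := (1/3:ℝ))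
    (F := fun (n : ℕ) (θ : ℝ) => (-1 : ℝ) ^ (n + 1) * r ^ n / n * Real.cos (2 * π * n * θ))
    (bound := fun n _ => r ^ n)
    (f := fun θ => (Complex.log (1 + r * Complex.exp (2 * (π : ℝ) * Complex.I * θ))).re)
    (fun n => (Continuous.aestronglyMeasurable (by fun_prop)))
    (fun n => by
      apply ae_of_all
      intro θ _
      rw [Real.norm_eq_abs, abs_mul, abs_div, abs_mul, abs_pow, abs_neg, abs_one, one_pow,
        one_mul, abs_pow, abs_of_nonneg h0, Nat.abs_cast]
      have h2 : r ^ n / (n : ℝ) ≤ r ^ n := by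
        rcases eq_or_ne n 0 with rfl | hn
        · simp
        · apply div_le_self (pow_nonneg h0 n)
          exact_mod_cast Nat.one_le_iff_ne_zero.mpr hn
      calc r ^ n / (n : ℝ) * |Real.cos (2 * π * n * θ)|
          ≤ r ^ n / (n : ℝ) * 1 := by
            apply mul_le_mul_of_nonneg_left (Real.abs_cos_le_one _) (by positivity)
        _ = r ^ n / (n : ℝ) := mul_one _
        _ ≤ r ^ n := h2)
    (ae_of_all _ fun θ _ => summable_geometric_of_lt_one h0 h1)
    (by
      have : (fun _ : ℝ => ∑' n : ℕ, r ^ n) = fun _ => (1 - r)⁻¹ := by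
        funext t
        exact tsum_geometric_of_lt_one h0 h1
      rw [this]
      exact intervalIntegrable_const)
    (ae_of_all _ fun θ _ => pointwise_hasSum r habs θ)
  have heq : (fun n : ℕ => coefC n * r ^ n)
      = fun n : ℕ => ∫ θ in (0:ℝ)..(1/3 : ℝ),
          (-1 : ℝ) ^ (n + 1) * r ^ n / n * Real.cos (2 * π * n * θ) :=
    funext fun n => (integral_term r n).symm
  rw [heq]
  exact H

lemma logPlus_continuous : Continuous logPlus := by
  apply Real.continuousOn_log.comp_continuous (continuous_const.max continuous_id)
  intro x
  simp only [Set.mem_compl_iff, Set.mem_singleton_iff]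
  exact ne_of_gt (lt_of_lt_of_le one_pos (le_max_left 1 x))

lemma logPlus_of_le_one {x : ℝ} (hx : x ≤ 1) : logPlus x = 0 := by
  unfold logPlus
  rw [max_eq_left hx, Real.log_one]

lemma re_one_add (r θ : ℝ) :
    (1 + (r : ℂ) * Complex.exp (2 * (π : ℝ) * Complex.I * θ)).re
      = 1 + r * Real.cos (2 * π * θ) := by
  rw [exp_two_pi_I_eq, Complex.add_re, Complex.one_re, Complex.re_ofReal_mul,
    Complex.exp_ofReal_mul_I_re]

lemma cos_two_pi_ge {θ : ℝ} (h0 : 0 ≤ θ) (h13 : θ ≤ 1/3) : -(1/2) ≤ Real.cos (2 * π * θ) := by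
  have hπ := Real.pi_pos
  have h1 : Real.cos (2 * π / 3) ≤ Real.cos (2 * π * θ) := by
    apply Real.cos_le_cos_of_nonneg_of_le_pi (by positivity) (by linarith)
    nlinarith
  have h2 : Real.cos (2 * π / 3) = -(1/2) := by
    rw [show 2 * π / 3 = π - π / 3 by ring, Real.cos_pi_sub, Real.cos_pi_div_three]
  linarith

lemma cos_pi_ge {θ : ℝ} (h0 : 0 ≤ θ) (h13 : θ ≤ 1/3) : 1/2 ≤ Real.cos (π * θ) := by
  have hπ := Real.pi_pos
  have h1 : Real.cos (π / 3) ≤ Real.cos (π * θ) := by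
    apply Real.cos_le_cos_of_nonneg_of_le_pi (by positivity) (by linarith)
    nlinarith
  rw [Real.cos_pi_div_three] at h1
  linarith

lemma cos_pi_mid {θ : ℝ} (h0 : 1/3 ≤ θ) (h13 : θ ≤ 2/3) : |Real.cos (π * θ)| ≤ 1/2 := by
  have hπ := Real.pi_pos
  rw [abs_le]
  constructor
  · have h1 : Real.cos (2 * π / 3) ≤ Real.cos (π * θ) := by
      apply Real.cos_le_cos_of_nonneg_of_le_pi (by positivity) (by linarith)
      nlinarith
    have h2 : Real.cos (2 * π / 3) = -(1/2) := by
      rw [show 2 * π / 3 = π - π / 3 by ring, Real.cos_pi_sub, Real.cos_pi_div_three]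
    linarith
  · have h1 : Real.cos (π * θ) ≤ Real.cos (π / 3) := by
      apply Real.cos_le_cos_of_nonneg_of_le_pi (by positivity) (by nlinarith)
      nlinarith
    rw [Real.cos_pi_div_three] at h1
    linarith

lemma gfun_continuousOn :
    ContinuousOn (fun x : ℝ => ∑' n : ℕ, coefC n * x ^ n) (Set.Icc (-1 : ℝ) 1) := by
  apply TendstoUniformlyOn.continuousOn
    (tendstoUniformlyOn_tsum_nat summable_abs_coefC (f := fun n x => coefC n * x ^ n)
      (u := fun n => |coefC n|) ?_)
  · exact (Filter.Eventually.of_forall fun N =>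
      (continuous_finset_sum (Finset.range N) fun i _ => (continuous_const.mul (continuous_pow i) : Continuous fun x : ℝ => coefC i * x ^ i)).continuousOn).frequently
  · intro n x hx
    rw [Real.norm_eq_abs, abs_mul, abs_pow]
    have : |x| ^ n ≤ 1 := pow_le_one₀ (abs_nonneg x) (abs_le.mpr ⟨hx.1, hx.2⟩)
    calc |coefC n| * |x| ^ n ≤ |coefC n| * 1 :=
          mul_le_mul_of_nonneg_left this (abs_nonneg _)
      _ = |coefC n| := mul_one _

open Filter Topology in
lemma tendsto_J :
    Filter.Tendsto (fun r : ℝ => ∫ θ in (0:ℝ)..(1/3:ℝ),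
        (Complex.log (1 + (r:ℂ) * Complex.exp (2 * (π : ℝ) * Complex.I * θ))).re)
      (nhdsWithin 1 (Set.Ico (0:ℝ) 1))
      (𝓝 (∫ θ in (0:ℝ)..(1/3:ℝ),
        (Complex.log (1 + Complex.exp (2 * (π : ℝ) * Complex.I * θ))).re)) := by
  apply intervalIntegral.tendsto_integral_filter_of_dominated_convergence
    (bound := fun _ => Real.log 2)
  · filter_upwards [self_mem_nhdsWithin] with r hr
    apply Continuous.aestronglyMeasurable
    apply Complex.continuous_re.comp
    rw [continuous_iff_continuousAt]
    intro θ
    have hre : 0 < (1 + (r:ℂ) * Complex.exp (2 * (π : ℝ) * Complex.I * θ)).re := by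
      rw [re_one_add]
      nlinarith [hr.1, hr.2, Real.neg_one_le_cos (2 * π * θ)]
    have hinner : ContinuousAt
        (fun x : ℝ => 1 + (r:ℂ) * Complex.exp (2 * (π : ℝ) * Complex.I * x)) θ :=
      (continuous_const.add (continuous_const.mul (Complex.continuous_exp.comp
        (continuous_const.mul Complex.continuous_ofReal)))).continuousAt
    exact ContinuousAt.comp (g := Complex.log)
      (f := fun x : ℝ => 1 + (r:ℂ) * Complex.exp (2 * (π : ℝ) * Complex.I * x)) (x := θ)
      (continuousAt_clog (Or.inl hre)) hinner
  · filter_upwards [self_mem_nhdsWithin] with r hr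
    apply ae_of_all
    intro θ hθ
    rw [Set.uIoc_of_le (by norm_num : (0:ℝ) ≤ 1/3)] at hθ
    have hcos := cos_two_pi_ge hθ.1.le hθ.2
    have hrez : 1/2 ≤ (1 + (r:ℂ) * Complex.exp (2 * (π : ℝ) * Complex.I * θ)).re := by
      rw [re_one_add]
      nlinarith [hr.1, hr.2]
    have hlo : 1/2 ≤ ‖1 + (r:ℂ) * Complex.exp (2 * (π : ℝ) * Complex.I * θ)‖ :=
      le_trans hrez (Complex.re_le_norm _)
    have hhi : ‖1 + (r:ℂ) * Complex.exp (2 * (π : ℝ) * Complex.I * θ)‖ ≤ 2 := by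
      calc ‖1 + (r:ℂ) * Complex.exp (2 * (π : ℝ) * Complex.I * θ)‖
          ≤ ‖(1:ℂ)‖ + ‖(r:ℂ) * Complex.exp (2 * (π : ℝ) * Complex.I * θ)‖ :=
            norm_add_le _ _
        _ = 1 + |r| := by
            rw [norm_one, norm_mul, Complex.norm_real, Real.norm_eq_abs, exp_two_pi_I_eq,
              Complex.norm_exp_ofReal_mul_I, mul_one]
        _ ≤ 2 := by rw [abs_of_nonneg hr.1]; linarith [hr.2]
    rw [Complex.log_re, Real.norm_eq_abs, abs_le]
    constructor
    · have h := Real.log_le_log (by norm_num : (0:ℝ) < 1/2) hlo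
      rw [show (1/2 : ℝ) = 2⁻¹ by norm_num, Real.log_inv] at h
      linarith
    · exact Real.log_le_log (by linarith) hhi
  · exact intervalIntegrable_const
  · apply ae_of_all
    intro θ hθ
    rw [Set.uIoc_of_le (by norm_num : (0:ℝ) ≤ 1/3)] at hθ
    have hre : 0 < (1 + ((1:ℝ):ℂ) * Complex.exp (2 * (π : ℝ) * Complex.I * θ)).re := by
      rw [re_one_add]
      nlinarith [cos_two_pi_ge hθ.1.le hθ.2]
    have hct : ContinuousAt
        (fun r : ℝ => (Complex.log (1 + (r:ℂ) * Complex.exp (2 * (π : ℝ) * Complex.I * θ))).re)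
        1 := by
      have hinner : ContinuousAt
          (fun r : ℝ => 1 + (r:ℂ) * Complex.exp (2 * (π : ℝ) * Complex.I * θ)) 1 :=
        (continuous_const.add (Complex.continuous_ofReal.mul continuous_const)).continuousAt
      exact Complex.continuous_re.continuousAt.comp
        (ContinuousAt.comp (g := Complex.log)
          (f := fun r : ℝ => 1 + (r:ℂ) * Complex.exp (2 * (π : ℝ) * Complex.I * θ)) (x := (1:ℝ))
          (continuousAt_clog (Or.inl hre)) hinner)
    have := hct.tendsto.mono_left (nhdsWithin_le_nhds (s := Set.Ico (0:ℝ) 1))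
    simpa using this

open Filter Topology in
theorem stmt4 :
    (∫ θ in (0:ℝ)..1, logPlus ‖1 + Complex.exp (2 * Real.pi * Complex.I * θ)‖)
      = (3 * Real.sqrt 3 / (4 * Real.pi)) * ∑' n : ℕ, chi3 n / (n : ℝ) ^ 2 := by
  have hπ := Real.pi_pos
  set f : ℝ → ℝ :=
    fun θ => logPlus ‖1 + Complex.exp (2 * (π : ℝ) * Complex.I * θ)‖ with hfdef
  have hE : Continuous fun θ : ℝ => 1 + Complex.exp (2 * (π : ℝ) * Complex.I * θ) :=
    continuous_const.add (Complex.continuous_exp.comp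
      (continuous_const.mul Complex.continuous_ofReal))
  have hcont : Continuous f := logPlus_continuous.comp (continuous_norm.comp hE)
  have hii : ∀ a b : ℝ, IntervalIntegrable f volume a b := fun a b =>
    hcont.intervalIntegrable a b
  have h1 := intervalIntegral.integral_add_adjacent_intervals (hii 0 (1/3)) (hii (1/3) 1)
  have h2 := intervalIntegral.integral_add_adjacent_intervals (hii (1/3) (2/3)) (hii (2/3) 1)
  have hmid : (∫ θ in (1/3:ℝ)..(2/3:ℝ), f θ) = 0 := by
    have hz : (∫ θ in (1/3:ℝ)..(2/3:ℝ), f θ) = ∫ θ in (1/3:ℝ)..(2/3:ℝ), (0:ℝ) := by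
      apply intervalIntegral.integral_congr
      intro θ hθ
      rw [Set.uIcc_of_le (by norm_num : (1/3:ℝ) ≤ 2/3)] at hθ
      show f θ = 0
      simp only [hfdef]
      apply logPlus_of_le_one
      rw [abs_one_add_exp]
      have := cos_pi_mid hθ.1 hθ.2
      linarith
    rw [hz, intervalIntegral.integral_zero]
  have hthird : (∫ θ in (2/3:ℝ)..1, f θ) = ∫ θ in (0:ℝ)..(1/3:ℝ), f θ := by
    have hsub := intervalIntegral.integral_comp_sub_left (a := (0:ℝ)) (b := (1/3:ℝ)) f 1
    rw [show (1:ℝ) - 1/3 = 2/3 by norm_num, show (1:ℝ) - 0 = 1 by norm_num] at hsub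
    rw [← hsub]
    apply intervalIntegral.integral_congr
    intro x hx
    show f (1 - x) = f x
    simp only [hfdef]
    rw [abs_one_add_exp, abs_one_add_exp, show π * (1 - x) = π - π * x by ring,
      Real.cos_pi_sub, abs_neg]
  have hfirst : (∫ θ in (0:ℝ)..(1/3:ℝ), f θ)
      = ∫ θ in (0:ℝ)..(1/3:ℝ),
          (Complex.log (1 + Complex.exp (2 * (π : ℝ) * Complex.I * θ))).re := by
    apply intervalIntegral.integral_congr
    intro θ hθ
    rw [Set.uIcc_of_le (by norm_num : (0:ℝ) ≤ 1/3)] at hθ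
    have hc := cos_pi_ge hθ.1 hθ.2
    show f θ = _
    simp only [hfdef]
    rw [Complex.log_re]
    unfold logPlus
    rw [max_eq_right]
    rw [abs_one_add_exp, abs_of_nonneg (by linarith : (0:ℝ) ≤ Real.cos (π * θ))]
    linarith
  -- Part B : the limit identification
  haveI hlne : (nhdsWithin (1:ℝ) (Set.Ico (0:ℝ) 1)).NeBot := by
    apply mem_closure_iff_nhdsWithin_neBot.mp
    rw [closure_Ico (show (0:ℝ) ≠ 1 by norm_num)]
    constructor <;> norm_num
  have hgtend : Tendsto (fun x : ℝ => ∑' n : ℕ, coefC n * x ^ n)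
      (nhdsWithin (1:ℝ) (Set.Ico (0:ℝ) 1)) (𝓝 (∑' n : ℕ, coefC n * 1 ^ n)) := by
    have hmem : (1:ℝ) ∈ Set.Icc (-1:ℝ) 1 := by constructor <;> norm_num
    exact (gfun_continuousOn 1 hmem).mono_left
      (nhdsWithin_mono 1 (fun x hx => ⟨by linarith [hx.1], le_of_lt hx.2⟩))
  have hJeq : ∀ᶠ r in nhdsWithin (1:ℝ) (Set.Ico (0:ℝ) 1),
      (∑' n : ℕ, coefC n * r ^ n)
        = ∫ θ in (0:ℝ)..(1/3:ℝ),
            (Complex.log (1 + (r:ℂ) * Complex.exp (2 * (π : ℝ) * Complex.I * θ))).re := by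
    filter_upwards [self_mem_nhdsWithin] with r hr
    exact (hasSum_J r hr.1 hr.2).tsum_eq
  have hK : (∫ θ in (0:ℝ)..(1/3:ℝ),
        (Complex.log (1 + Complex.exp (2 * (π : ℝ) * Complex.I * θ))).re)
      = ∑' n : ℕ, coefC n * 1 ^ n :=
    tendsto_nhds_unique tendsto_J (hgtend.congr' hJeq)
  have h1pow : (∑' n : ℕ, coefC n * 1 ^ n) = ∑' n : ℕ, coefC n := by simp
  have hcoef : ∀ n : ℕ, coefC n
      = (Real.sqrt 3 / (4 * π)) * ((-1 : ℝ) ^ (n + 1) * chi3 n / (n : ℝ) ^ 2) := by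
    intro n
    unfold coefC
    rw [sin_two_pi_nat_div_three]
    rcases eq_or_ne n 0 with rfl | hn
    · simp [chi3]
    · have hn' : (n : ℝ) ≠ 0 := Nat.cast_ne_zero.mpr hn
      field_simp
      ring
  have hsum : (∑' n : ℕ, coefC n)
      = (Real.sqrt 3 / (4 * π)) * ((3/2) * ∑' n : ℕ, chi3 n / (n : ℝ) ^ 2) := by
    rw [tsum_congr hcoef, tsum_mul_left, tsum_alt_chi3]
  have htotal : (∫ θ in (0:ℝ)..1, f θ)
      = 2 * ∫ θ in (0:ℝ)..(1/3:ℝ), f θ := by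
    rw [← h1, ← h2, hmid, hthird]
    ring
  rw [htotal, hfirst, hK, h1pow, hsum]
  ring
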